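/- arXiv:2502.04149 — 3 statements merged into one kernel-verified Lean document; each statement's English description precedes it below -/
import Mathlib

section
/- Let ξ = re^{iθ} with r > 1 and θ ∈ [0,π/4]. Then property (C_1), i.e. ξ^{−1}𝒳 ⊆ 𝒳, holds if and only if r ≥ cos θ + sin θ. In particular, (C_1) holds whenever ξ has a square digit set (of some size N ≥ 1), and (C_1) holds whenever r ≥ √2. -/
/-- The fundamental domain `𝒳 = {a + b i : a, b ∈ [−1/2, 1/2)}` of the lattice `ℤ[i]`. -/
def cX : Set ℂ :=
  {z : ℂ | z.re ∈ Set.Ico (-(1 / 2) : ℝ) (1 / 2) ∧ z.im ∈ Set.Ico (-(1 / 2) : ℝ) (1 / 2)}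

/-- The digit map: `d(z) = ⌊Re(ξz) + 1/2⌋ + ⌊Im(ξz) + 1/2⌋ i`. -/
noncomputable def cdg (ξ z : ℂ) : ℂ :=
  (⌊(ξ * z).re + 1 / 2⌋ : ℤ) + (⌊(ξ * z).im + 1 / 2⌋ : ℤ) * Complex.I

/-- The transformation `𝕋 z = ξ z − d(z)`. -/
noncomputable def cT (ξ z : ℂ) : ℂ := ξ * z - cdg ξ z

/-- `cdig ξ n z` is the `(n+1)`-th digit `d_{n+1}(z) = d(𝕋^[n] z)`. -/
noncomputable def cdig (ξ : ℂ) (n : ℕ) (z : ℂ) : ℂ := cdg ξ ((cT ξ)^[n] z)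

/-- The digit set `𝒟 = {d(z) : z ∈ 𝒳}`. -/
noncomputable def cD (ξ : ℂ) : Set ℂ := cdg ξ '' cX

/-- `ξ` has a square digit set of size `N`. -/
noncomputable def squareDS (ξ : ℂ) (N : ℕ) : Prop :=
  cD ξ = {w : ℂ | ∃ a b : ℤ, w = (a : ℂ) + (b : ℂ) * Complex.I ∧ |a| ≤ (N : ℤ) ∧ |b| ≤ (N : ℤ)}

/-- A block `a_0 ⋯ a_{m-1}` is admissible if it occurs as a block of consecutive
digits of the expansion of some `z ∈ 𝒳`. -/
noncomputable def cAdm (ξ : ℂ) (m : ℕ) (a : ℕ → ℂ) : Prop :=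
  ∃ z ∈ cX, ∃ m₀ : ℕ, ∀ j < m, a j = cdig ξ (m₀ + j) z

/-- Property `(C_n)`: `ξ^{-n} 𝒳 + ξ^{-(n-1)} a_{n-1} + ⋯ + ξ^{-1} a_1 ⊆ 𝒳` for every
admissible block `a_1 ⋯ a_{n-1}` (for `n = 1` this reads `ξ^{-1} 𝒳 ⊆ 𝒳`). -/
noncomputable def propC (ξ : ℂ) (n : ℕ) : Prop :=
  ∀ a : ℕ → ℂ, cAdm ξ (n - 1) a →
    ∀ x ∈ cX,
      ξ ^ (-(n : ℤ)) * x + ∑ j ∈ Finset.range (n - 1), ξ ^ (-((j : ℤ) + 1)) * a j ∈ cX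

/-- `f_N^{(k)}(r) = r^k − 2N Σ_{j=1}^{k−1} r^{k−j}(|cos jθ| + |sin jθ|) − (|cos kθ| + |sin kθ|)`;
its unique positive root is `v_N^{(k)}(θ)`. -/
noncomputable def fNk (θ : ℝ) (N k : ℕ) (r : ℝ) : ℝ :=
  r ^ k -
    2 * (N : ℝ) * ∑ j ∈ Finset.range (k - 1),
      r ^ (k - 1 - j) * (|Real.cos (((j : ℝ) + 1) * θ)| + |Real.sin (((j : ℝ) + 1) * θ)|) -
    (|Real.cos ((k : ℝ) * θ)| + |Real.sin ((k : ℝ) * θ)|)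


lemma zero_mem_cX : (0 : ℂ) ∈ cX := by
  constructor <;> constructor <;> norm_num

lemma cAdm_zero (ξ : ℂ) (a : ℕ → ℂ) : cAdm ξ 0 a :=
  ⟨0, zero_mem_cX, 0, fun j hj => absurd hj (Nat.not_lt_zero j)⟩

lemma propC_one_iff (ξ : ℂ) : propC ξ 1 ↔ ∀ x ∈ cX, ξ⁻¹ * x ∈ cX := by
  unfold propC
  constructor
  · intro h x hx
    have := h (fun _ => 0) (cAdm_zero ξ _) x hx
    simpa using this
  · intro h a _ x hx
    simpa using h x hx

set_option maxHeartbeats 1000000 in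
/-- `(C_1)`, i.e. `ξ^{-1}𝒳 ⊆ 𝒳`, holds iff `r ≥ cos θ + sin θ`.  In particular `(C_1)`
holds whenever `ξ` has a square digit set (of some size `N ≥ 1`), and whenever `r ≥ √2`. -/
theorem stmt12 (r θ : ℝ) (hr : 1 < r) (hθ : θ ∈ Set.Icc 0 (Real.pi / 4))
    (ξ : ℂ) (hξ : ξ = (r : ℂ) * Complex.exp (θ * Complex.I)) :
    (propC ξ 1 ↔ Real.cos θ + Real.sin θ ≤ r) ∧
    ((∃ N : ℕ, 1 ≤ N ∧ squareDS ξ N) → propC ξ 1) ∧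
    (Real.sqrt 2 ≤ r → propC ξ 1) := by
  obtain ⟨hθ0, hθ4⟩ := hθ
  have hpi := Real.pi_pos
  set c := Real.cos θ with hcdef
  set s := Real.sin θ with hsdef
  have hr0 : (0:ℝ) < r := lt_trans one_pos hr
  have hc : 0 < c := Real.cos_pos_of_mem_Ioo ⟨by linarith, by linarith⟩
  have hs : 0 ≤ s := Real.sin_nonneg_of_nonneg_of_le_pi hθ0 (by linarith)
  have hcs1 : c^2 + s^2 = 1 := by
    rw [hcdef, hsdef]; exact Real.cos_sq_add_sin_sq θ
  have hre : ξ.re = r * c := by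
    simp [hξ, Complex.mul_re, Complex.exp_ofReal_mul_I_re, Complex.exp_ofReal_mul_I_im, hcdef]
  have him : ξ.im = r * s := by
    simp [hξ, Complex.mul_im, Complex.exp_ofReal_mul_I_re, Complex.exp_ofReal_mul_I_im, hsdef]
  have hξ0 : ξ ≠ 0 := by
    intro h
    rw [h] at hre
    simp at hre
    rcases hre with h | h
    · exact absurd h (ne_of_gt hr0)
    · exact absurd h (ne_of_gt hc)
  set w : ℂ := (↑(c/r) : ℂ) - ↑(s/r) * Complex.I with hwdef
  have hw : ξ * w = 1 := by
    apply Complex.ext <;>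
      simp [hwdef, Complex.mul_re, Complex.mul_im, hre, him] <;>
      field_simp <;> nlinarith [hcs1]
  have hinv : ξ⁻¹ = w := inv_eq_of_mul_eq_one_right hw
  have hwre : ∀ x : ℂ, (w * x).re = (c * x.re + s * x.im) / r := by
    intro x
    simp [hwdef, Complex.mul_re]
    field_simp
    try ring
  have hwim : ∀ x : ℂ, (w * x).im = (c * x.im - s * x.re) / r := by
    intro x
    simp [hwdef, Complex.mul_im]
    field_simp
    try ring
  -- backward direction of the iff
  have hback : c + s ≤ r → propC ξ 1 := by
    intro hle
    rw [propC_one_iff]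
    rintro x ⟨⟨hx1, hx2⟩, ⟨hx3, hx4⟩⟩
    rw [hinv]
    have e1 : c * x.re < c * (1/2) := mul_lt_mul_of_pos_left hx2 hc
    have e2 : c * (-(1/2)) ≤ c * x.re := mul_le_mul_of_nonneg_left hx1 (le_of_lt hc)
    have e3 : s * x.im ≤ s * (1/2) := mul_le_mul_of_nonneg_left (le_of_lt hx4) hs
    have e4 : s * (-(1/2)) ≤ s * x.im := mul_le_mul_of_nonneg_left hx3 hs
    have f1 : c * x.im < c * (1/2) := mul_lt_mul_of_pos_left hx4 hc
    have f2 : c * (-(1/2)) ≤ c * x.im := mul_le_mul_of_nonneg_left hx3 (le_of_lt hc)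
    have f3 : s * x.re ≤ s * (1/2) := mul_le_mul_of_nonneg_left (le_of_lt hx2) hs
    have f4 : s * (-(1/2)) ≤ s * x.re := mul_le_mul_of_nonneg_left hx1 hs
    constructor
    · rw [hwre x]
      constructor
      · rw [le_div_iff₀ hr0]; linarith
      · rw [div_lt_iff₀ hr0]; linarith
    · rw [hwim x]
      constructor
      · rw [le_div_iff₀ hr0]; linarith
      · rw [div_lt_iff₀ hr0]; linarith
  -- forward direction of the iff
  have hfwd : propC ξ 1 → c + s ≤ r := by
    intro h
    by_contra hlt
    push_neg at hlt
    have hcs0 : 0 < c + s := by linarith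
    set t : ℝ := r / (2 * (c + s)) with htdef
    have ht0 : 0 < t := by positivity
    have ht : t < 1/2 := by
      rw [htdef, div_lt_iff₀ (by linarith)]
      linarith
    set x : ℂ := (↑t : ℂ) + ↑t * Complex.I with hxdef
    have hxre : x.re = t := by simp [hxdef]
    have hxim : x.im = t := by simp [hxdef]
    have hx : x ∈ cX := by
      constructor <;> rw [Set.mem_Ico] <;> constructor
      · rw [hxre]; linarith
      · rw [hxre]; linarith
      · rw [hxim]; linarith
      · rw [hxim]; linarith
    have := (propC_one_iff ξ).mp h x hx
    rw [hinv] at this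
    have hlt2 : (w * x).re < 1/2 := this.1.2
    rw [hwre x, hxre, hxim] at hlt2
    have : (c * t + s * t) / r = 1/2 := by
      rw [htdef]
      field_simp
    linarith
  refine ⟨⟨hfwd, hback⟩, ?_, ?_⟩
  · rintro ⟨N, hN1, hsq⟩
    apply hback
    have hmem : ((N : ℂ) + (N : ℂ) * Complex.I) ∈ cD ξ := by
      rw [hsq]
      exact ⟨(N : ℤ), (N : ℤ), by push_cast; ring_nf,
        by rw [abs_of_nonneg (Int.ofNat_nonneg N)],
        by rw [abs_of_nonneg (Int.ofNat_nonneg N)]⟩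
    obtain ⟨z, hz, hdz⟩ := hmem
    unfold cdg at hdz
    rw [Complex.ext_iff] at hdz
    obtain ⟨hdre, hdim⟩ := hdz
    simp at hdre hdim
    have hA : (N : ℝ) ≤ ξ.re * z.re - ξ.im * z.im + 2⁻¹ := by
      calc (N : ℝ) = ((⌊ξ.re * z.re - ξ.im * z.im + 2⁻¹⌋ : ℤ) : ℝ) := by exact_mod_cast hdre.symm
        _ ≤ _ := Int.floor_le _
    have hB : (N : ℝ) ≤ ξ.re * z.im + ξ.im * z.re + 2⁻¹ := by
      calc (N : ℝ) = ((⌊ξ.re * z.im + ξ.im * z.re + 2⁻¹⌋ : ℤ) : ℝ) := by exact_mod_cast hdim.symm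
        _ ≤ _ := Int.floor_le _
    have hN1' : (1 : ℝ) ≤ (N : ℝ) := by exact_mod_cast hN1
    have hA' : (1:ℝ)/2 ≤ (ξ * z).re := by rw [Complex.mul_re]; linarith
    have hB' : (1:ℝ)/2 ≤ (ξ * z).im := by rw [Complex.mul_im]; linarith
    have hzre : z.re = (c * (ξ * z).re + s * (ξ * z).im) / r := by
      have : w * (ξ * z) = z := by
        rw [← mul_assoc, mul_comm w ξ, hw, one_mul]
      conv_lhs => rw [← this]
      exact hwre (ξ * z)
    have hzlt : z.re < 1/2 := hz.1.2
    rw [hzre, div_lt_iff₀ hr0] at hzlt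
    have g1 : c * (1/2) ≤ c * (ξ * z).re := mul_le_mul_of_nonneg_left hA' (le_of_lt hc)
    have g2 : s * (1/2) ≤ s * (ξ * z).im := mul_le_mul_of_nonneg_left hB' hs
    linarith
  · intro h2
    apply hback
    have hsq2 : Real.sqrt 2 ^ 2 = 2 := Real.sq_sqrt (by norm_num)
    have hsqn : 0 ≤ Real.sqrt 2 := Real.sqrt_nonneg 2
    nlinarith [sq_nonneg (c - s), sq_nonneg (c + s - Real.sqrt 2)]
end

section
/- Let θ ∈ [0,π/4], let k ≥ 2 be an integer, let ξ = re^{iθ} with r > 1, and set N := ⌈(r(c+s)+1)/2⌉ − 1. If r > v_N^{(k)}(θ) and property (C_k) holds for the ξ-expansion, then ξ has a square digit set (of size N). -/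
set_option maxHeartbeats 2000000 in
/-- With `N := ⌈(r(c+s)+1)/2⌉ − 1` : if `r > v_N^{(k)}(θ)` and `(C_k)` holds for the
`ξ`-expansion, then `ξ` has a square digit set (of size `N`). -/
theorem stmt13 (r θ : ℝ) (hr : 1 < r) (hθ : θ ∈ Set.Icc 0 (Real.pi / 4))
    (ξ : ℂ) (hξ : ξ = (r : ℂ) * Complex.exp (θ * Complex.I))
    (k : ℕ) (hk : 2 ≤ k)
    (N : ℕ) (hNdef : (N : ℤ) = ⌈(r * (Real.cos θ + Real.sin θ) + 1) / 2⌉ - 1)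
    (v : ℝ) (hv : 0 < v) (hroot : fNk θ N k v = 0)
    (hrv : v < r) (hCk : propC ξ k) :
    squareDS ξ N := by
  obtain ⟨hθ0, hθ4⟩ := hθ
  have hπ : (0:ℝ) < Real.pi := Real.pi_pos
  set c := Real.cos θ with hcdef
  set s := Real.sin θ with hsdef
  have hc : 0 < c := Real.cos_pos_of_mem_Ioo ⟨by linarith, by linarith⟩
  have hs : 0 ≤ s := Real.sin_nonneg_of_nonneg_of_le_pi hθ0 (by linarith)
  have hpyth : c ^ 2 + s ^ 2 = 1 := Real.cos_sq_add_sin_sq θ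
  have hr0 : (0:ℝ) < r := by linarith
  have hξ0 : ξ ≠ 0 := by
    rw [hξ]
    exact mul_ne_zero (by exact_mod_cast hr0.ne') (Complex.exp_ne_zero _)
  have hre : ∀ z : ℂ, (ξ * z).re = r * (c * z.re - s * z.im) := by
    intro z; rw [hξ]
    simp [Complex.exp_mul_I, Complex.mul_re, Complex.mul_im, Complex.cos_ofReal_re,
      Complex.sin_ofReal_re, hcdef, hsdef]
    ring
  have him : ∀ z : ℂ, (ξ * z).im = r * (s * z.re + c * z.im) := by
    intro z; rw [hξ]
    simp [Complex.exp_mul_I, Complex.mul_re, Complex.mul_im, Complex.cos_ofReal_re,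
      Complex.sin_ofReal_re, hcdef, hsdef]
    ring
  -- Key inequality 1 : 2 N (c+s) < r
  have hvk1 : (0:ℝ) < v ^ (k - 1) := pow_pos hv _
  have hNr : 2 * (N:ℝ) * (c + s) < r := by
    have hsum : v ^ (k-1) * (c + s) ≤
        ∑ j ∈ Finset.range (k - 1),
          v ^ (k - 1 - j) * (|Real.cos (((j : ℝ) + 1) * θ)| + |Real.sin (((j : ℝ) + 1) * θ)|) := by
      have h0 : (0:ℕ) ∈ Finset.range (k-1) := by
        simp; omega
      have := Finset.single_le_sum
        (f := fun j : ℕ => v ^ (k - 1 - j) *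
          (|Real.cos (((j : ℝ) + 1) * θ)| + |Real.sin (((j : ℝ) + 1) * θ)|))
        (fun j _ => by positivity) h0
      simpa [abs_of_pos (show 0 < Real.cos θ from hc), abs_of_nonneg (show 0 ≤ Real.sin θ from hs), hcdef, hsdef] using this
    have hA : 0 ≤ |Real.cos ((k : ℝ) * θ)| + |Real.sin ((k : ℝ) * θ)| := by positivity
    have hvk : v ^ k = v * v ^ (k-1) := by
      rw [← pow_succ']
      congr 1
      omega
    unfold fNk at hroot
    have hNv : 2 * (N:ℝ) * (c + s) * v ^ (k-1) ≤ v * v ^ (k-1) := by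
      have hN0 : (0:ℝ) ≤ (N:ℝ) := Nat.cast_nonneg _
      nlinarith [hsum, hA, hroot, hvk]
    have := le_of_mul_le_mul_right hNv hvk1
    linarith
  -- Key inequality 2 : r (c+s) ≤ 2 N + 1
  have hrN : r * (c + s) ≤ 2 * (N:ℝ) + 1 := by
    have hce : (⌈(r * (c + s) + 1) / 2⌉ : ℤ) = (N : ℤ) + 1 := by omega
    have h := Int.le_ceil ((r * (c + s) + 1) / 2)
    rw [hce] at h
    push_cast at h
    linarith
  unfold squareDS cD
  ext w
  simp only [Set.mem_image, Set.mem_setOf_eq]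
  constructor
  · rintro ⟨z, hz, rfl⟩
    simp only [cX, Set.mem_setOf_eq, Set.mem_Ico] at hz
    obtain ⟨⟨hx1, hx2⟩, ⟨hy1, hy2⟩⟩ := hz
    refine ⟨⌊(ξ * z).re + 1 / 2⌋, ⌊(ξ * z).im + 1 / 2⌋, rfl, ?_, ?_⟩
    · rw [abs_le]
      constructor
      · rw [Int.le_floor]
        rw [hre z]
        push_cast
        nlinarith [mul_le_mul_of_nonneg_left hx1 (mul_pos hr0 hc).le,
          mul_lt_mul_of_pos_left hy2 (mul_pos hr0 hc), mul_le_mul_of_nonneg_left hy2.le (mul_nonneg hr0.le hs),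
          mul_le_mul_of_nonneg_left hx1 (mul_nonneg hr0.le hs)]
      · have : ⌊(ξ * z).re + 1 / 2⌋ < (N:ℤ) + 1 := by
          rw [Int.floor_lt, hre z]
          push_cast
          nlinarith [mul_lt_mul_of_pos_left hx2 (mul_pos hr0 hc),
            mul_le_mul_of_nonneg_left hy1 (mul_nonneg hr0.le hs)]
        omega
    · rw [abs_le]
      constructor
      · rw [Int.le_floor]
        rw [him z]
        push_cast
        nlinarith [mul_le_mul_of_nonneg_left hy1 (mul_pos hr0 hc).le,
          mul_le_mul_of_nonneg_left hx1 (mul_nonneg hr0.le hs)]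
      · have : ⌊(ξ * z).im + 1 / 2⌋ < (N:ℤ) + 1 := by
          rw [Int.floor_lt, him z]
          push_cast
          nlinarith [mul_lt_mul_of_pos_left hy2 (mul_pos hr0 hc),
            mul_le_mul_of_nonneg_left hx2.le (mul_nonneg hr0.le hs)]
        omega
  · rintro ⟨a, b, rfl, ha, hb⟩
    set z : ℂ := ((a:ℂ) + (b:ℂ) * Complex.I) / ξ with hzdef
    have hz : ξ * z = (a:ℂ) + (b:ℂ) * Complex.I := mul_div_cancel₀ _ hξ0
    have e1 : r * (c * z.re - s * z.im) = (a:ℝ) := by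
      rw [← hre z, hz]
      simp
    have e2 : r * (s * z.re + c * z.im) = (b:ℝ) := by
      rw [← him z, hz]
      simp
    have hzre : r * z.re = c * (a:ℝ) + s * (b:ℝ) := by
      linear_combination c * e1 + s * e2 - r * z.re * hpyth
    have hzim : r * z.im = c * (b:ℝ) - s * (a:ℝ) := by
      linear_combination c * e2 - s * e1 - r * z.im * hpyth
    have haR : |(a:ℝ)| ≤ (N:ℝ) := by exact_mod_cast ha
    have hbR : |(b:ℝ)| ≤ (N:ℝ) := by exact_mod_cast hb
    obtain ⟨ha1, ha2⟩ := abs_le.mp haR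
    obtain ⟨hb1, hb2⟩ := abs_le.mp hbR
    refine ⟨z, ?_, ?_⟩
    · simp only [cX, Set.mem_setOf_eq, Set.mem_Ico]
      refine ⟨⟨?_, ?_⟩, ⟨?_, ?_⟩⟩
      · nlinarith [mul_le_mul_of_nonneg_left ha1 hc.le, mul_le_mul_of_nonneg_left hb1 hs]
      · nlinarith [mul_le_mul_of_nonneg_left ha2 hc.le, mul_le_mul_of_nonneg_left hb2 hs]
      · nlinarith [mul_le_mul_of_nonneg_left hb1 hc.le, mul_le_mul_of_nonneg_left ha2 hs]
      · nlinarith [mul_le_mul_of_nonneg_left hb2 hc.le, mul_le_mul_of_nonneg_left ha1 hs]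
    · unfold cdg
      rw [hz]
      have hfa : ⌊((a:ℂ) + (b:ℂ) * Complex.I).re + 1/2⌋ = a := by
        simp
        norm_num
      have hfb : ⌊((a:ℂ) + (b:ℂ) * Complex.I).im + 1/2⌋ = b := by
        simp
        norm_num
      rw [hfa, hfb]
end

section
/- Assume the fundamental domain 𝒳 ⊂ ℍ has a nonzero interior point, and let t ≥ 0 be a real number. Then there exists a constant C_t > 0 (depending only on 𝒳 and t) such that for every q ∈ ℍ with |q| > 1 and all α, β ∈ (0,1) satisfying αβ|q| = 1 and C_t·β ≤ 1 (equivalently C_t·|q|^{−1} ≤ α), the set {z ∈ 𝒳 : some digit d of 𝕕_q(z) satisfies |d| ≤ t} is (α,β)-losing for Schmidt's game played on 𝒳. -/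
/-- The digit map of the `(q, 𝓛, 𝒳)`-expansion on the quaternions: `d(z)` is the unique
element of the lattice `L` with `q z − d(z) ∈ X`. -/
noncomputable def qdg (L : AddSubgroup (Quaternion ℝ)) (X : Set (Quaternion ℝ))
    (hfund : ∀ w : Quaternion ℝ, ∃! d, d ∈ L ∧ w - d ∈ X) (q z : Quaternion ℝ) :
    Quaternion ℝ :=
  (hfund (q * z)).choose

/-- The transformation `𝕋 z = q z − d(z)`. -/
noncomputable def qT (L : AddSubgroup (Quaternion ℝ)) (X : Set (Quaternion ℝ))
    (hfund : ∀ w : Quaternion ℝ, ∃! d, d ∈ L ∧ w - d ∈ X) (q z : Quaternion ℝ) :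
    Quaternion ℝ :=
  q * z - qdg L X hfund q z

/-- `qdig … n z` is the `(n+1)`-th digit `d_{n+1}(z) = d(𝕋^[n] z)` of the `q`-expansion. -/
noncomputable def qdig (L : AddSubgroup (Quaternion ℝ)) (X : Set (Quaternion ℝ))
    (hfund : ∀ w : Quaternion ℝ, ∃! d, d ∈ L ∧ w - d ∈ X) (q : Quaternion ℝ) (n : ℕ)
    (z : Quaternion ℝ) : Quaternion ℝ :=
  qdg L X hfund q ((qT L X hfund q)^[n] z)

/-- The sequence of Bob's centers determined by his initial center `x0`, his strategy `g`
(mapping Alice's moves `y_0, …, y_n` to Bob's next center `x_{n+1}`) and Alice's moves. -/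
def bobSeq {E : Type*} (x0 : E) (g : (n : ℕ) → (Fin (n + 1) → E) → E) (y : ℕ → E) : ℕ → E
  | 0 => x0
  | n + 1 => g n fun i => y i.1

/-- `S` is `(α,β)`-losing for Schmidt's game on `X`: for some initial radius `ρ > 0`,
Bob has a strategy (an initial center `x0 ∈ X` together with `g`) such that, against
every sequence of legal moves of Alice, all of Bob's moves are legal and the outcome
`ω = lim xₙ` is not in `S`.  Radii: `ρ_n = (αβ)ⁿ ρ`; Alice's move satisfies
`dist x_n y_{n+1} + α ρ_n ≤ ρ_n`; Bob's move satisfies `dist y_{n+1} x_{n+1} + ρ_{n+1} ≤ α ρ_n`. -/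
def BobWinning {E : Type*} [MetricSpace E] (X S : Set E) (α β : ℝ) : Prop :=
  ∃ ρ : ℝ, 0 < ρ ∧ ∃ x0 ∈ X, ∃ g : (n : ℕ) → (Fin (n + 1) → E) → E,
    ∀ y : ℕ → E,
      (∀ n : ℕ, y n ∈ X ∧
        dist (bobSeq x0 g y n) (y n) + α * ((α * β) ^ n * ρ) ≤ (α * β) ^ n * ρ) →
      ((∀ n : ℕ, bobSeq x0 g y (n + 1) ∈ X ∧
          dist (y n) (bobSeq x0 g y (n + 1)) + (α * β) ^ (n + 1) * ρ
            ≤ α * ((α * β) ^ n * ρ)) ∧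
        ∀ ω : E, Filter.Tendsto (bobSeq x0 g y) Filter.atTop (nhds ω) → ω ∉ S)

open scoped Classical


/-- Unit vector in direction `w` (or `1` if `w = 0`). -/
noncomputable def unitdir (w : Quaternion ℝ) : Quaternion ℝ :=
  if w = 0 then 1 else ‖w‖⁻¹ • w

lemma norm_unitdir (w : Quaternion ℝ) : ‖unitdir w‖ = 1 := by
  unfold unitdir
  split
  · simp
  · rename_i h
    rw [norm_smul, norm_inv, norm_norm, inv_mul_cancel₀ (norm_ne_zero_iff.mpr h)]

lemma norm_add_smul_unitdir (w : Quaternion ℝ) {s : ℝ} (hs : 0 ≤ s) :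
    ‖w + s • unitdir w‖ = ‖w‖ + s := by
  unfold unitdir
  split
  · rename_i h
    subst h
    simp [norm_smul, abs_of_nonneg hs]
  · rename_i h
    have hw : ‖w‖ ≠ 0 := norm_ne_zero_iff.mpr h
    have hwpos : (0:ℝ) < ‖w‖ := norm_pos_iff.mpr h
    have e : w + s • (‖w‖⁻¹ • w) = (1 + s * ‖w‖⁻¹) • w := by
      rw [smul_smul, add_smul, one_smul]
    have h1 : (0:ℝ) ≤ 1 + s * ‖w‖⁻¹ := by positivity
    rw [e, norm_smul, Real.norm_eq_abs, abs_of_nonneg h1]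
    field_simp

/-- The digit Bob targets, given the rescaled (and `q`-multiplied) Alice center `v`:
a lattice point close to `v + s • unitdir (v - ζ)` shifted by `ζ`. -/
noncomputable def stepD (L : AddSubgroup (Quaternion ℝ)) (X : Set (Quaternion ℝ))
    (hfund : ∀ w : Quaternion ℝ, ∃! d, d ∈ L ∧ w - d ∈ X)
    (ζ : Quaternion ℝ) (s : ℝ) (v : Quaternion ℝ) : Quaternion ℝ :=
  (hfund (v + s • unitdir (v - ζ) - ζ)).choose

lemma stepD_mem (L : AddSubgroup (Quaternion ℝ)) (X : Set (Quaternion ℝ))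
    (hfund : ∀ w : Quaternion ℝ, ∃! d, d ∈ L ∧ w - d ∈ X)
    (ζ : Quaternion ℝ) (s : ℝ) (v : Quaternion ℝ) :
    stepD L X hfund ζ s v ∈ L :=
  (hfund _).choose_spec.1.1

lemma stepD_sub_mem (L : AddSubgroup (Quaternion ℝ)) (X : Set (Quaternion ℝ))
    (hfund : ∀ w : Quaternion ℝ, ∃! d, d ∈ L ∧ w - d ∈ X)
    (ζ : Quaternion ℝ) (s : ℝ) (v : Quaternion ℝ) :
    v + s • unitdir (v - ζ) - ζ - stepD L X hfund ζ s v ∈ X :=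
  (hfund _).choose_spec.1.2

lemma stepD_norm_ge (L : AddSubgroup (Quaternion ℝ)) (X : Set (Quaternion ℝ))
    (hfund : ∀ w : Quaternion ℝ, ∃! d, d ∈ L ∧ w - d ∈ X)
    (ζ : Quaternion ℝ) {s R : ℝ} (hs : 0 ≤ s) (hR : ∀ x ∈ X, ‖x‖ ≤ R)
    (v : Quaternion ℝ) : s - R ≤ ‖stepD L X hfund ζ s v‖ := by
  have h1 : ‖v + s • unitdir (v - ζ) - ζ - stepD L X hfund ζ s v‖ ≤ R :=
    hR _ (stepD_sub_mem L X hfund ζ s v)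
  have h2 : ‖v + s • unitdir (v - ζ) - ζ‖ = ‖v - ζ‖ + s := by
    have : v + s • unitdir (v - ζ) - ζ = (v - ζ) + s • unitdir (v - ζ) := by abel
    rw [this, norm_add_smul_unitdir _ hs]
  have h3 := norm_sub_norm_le (v + s • unitdir (v - ζ) - ζ) (stepD L X hfund ζ s v)
  have h4 : (0:ℝ) ≤ ‖v - ζ‖ := norm_nonneg _
  linarith

lemma stepD_dist_le (L : AddSubgroup (Quaternion ℝ)) (X : Set (Quaternion ℝ))
    (hfund : ∀ w : Quaternion ℝ, ∃! d, d ∈ L ∧ w - d ∈ X)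
    (ζ : Quaternion ℝ) {s R : ℝ} (hs : 0 ≤ s) (hR : ∀ x ∈ X, ‖x‖ ≤ R)
    (v : Quaternion ℝ) : ‖v - (ζ + stepD L X hfund ζ s v)‖ ≤ s + R := by
  have h1 : ‖v + s • unitdir (v - ζ) - ζ - stepD L X hfund ζ s v‖ ≤ R :=
    hR _ (stepD_sub_mem L X hfund ζ s v)
  have e : v - (ζ + stepD L X hfund ζ s v) =
      (v + s • unitdir (v - ζ) - ζ - stepD L X hfund ζ s v) - s • unitdir (v - ζ) := by
    abel
  rw [e]
  calc ‖_ - s • unitdir (v - ζ)‖ ≤ ‖v + s • unitdir (v - ζ) - ζ - stepD L X hfund ζ s v‖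
        + ‖s • unitdir (v - ζ)‖ := norm_sub_le _ _
    _ ≤ R + s := by
        rw [norm_smul, norm_unitdir, Real.norm_eq_abs, abs_of_nonneg hs, mul_one]
        linarith
    _ = s + R := by ring

/-- The pair (Bob's center, cumulative prefix sum `c_n`) determined by Alice's moves. -/
noncomputable def hist (L : AddSubgroup (Quaternion ℝ)) (X : Set (Quaternion ℝ))
    (hfund : ∀ w : Quaternion ℝ, ∃! d, d ∈ L ∧ w - d ∈ X)
    (ζ : Quaternion ℝ) (s : ℝ) (q : Quaternion ℝ) (y : ℕ → Quaternion ℝ) :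
    ℕ → Quaternion ℝ × Quaternion ℝ
  | 0 => (ζ, 0)
  | n + 1 =>
    let c := (hist L X hfund ζ s q y n).2
    let d := stepD L X hfund ζ s (q * (q ^ n * y n - c))
    ((q ^ (n + 1))⁻¹ * (ζ + (q * c + d)), q * c + d)

lemma hist_congr (L : AddSubgroup (Quaternion ℝ)) (X : Set (Quaternion ℝ))
    (hfund : ∀ w : Quaternion ℝ, ∃! d, d ∈ L ∧ w - d ∈ X)
    (ζ : Quaternion ℝ) (s : ℝ) (q : Quaternion ℝ) (y₁ y₂ : ℕ → Quaternion ℝ) :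
    ∀ n, (∀ m, m < n → y₁ m = y₂ m) →
      hist L X hfund ζ s q y₁ n = hist L X hfund ζ s q y₂ n
  | 0, _ => rfl
  | n + 1, h => by
    have ih := hist_congr L X hfund ζ s q y₁ y₂ n (fun m hm => h m (hm.trans n.lt_succ_self))
    simp only [hist, ih, h n n.lt_succ_self]

/-- For `t ≥ 0` there is a constant `C_t > 0` such that: for every quaternion base `q`
with `|q| > 1` and all `α, β ∈ (0,1)` with `αβ|q| = 1` and `C_t β ≤ 1`, the set
`{z ∈ 𝒳 : some digit d of 𝕕_q(z) satisfies |d| ≤ t}` is `(α,β)`-losing. -/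
theorem stmt18 (L : AddSubgroup (Quaternion ℝ)) (X : Set (Quaternion ℝ))
    (hbd : Bornology.IsBounded X) (h0L : (0 : Quaternion ℝ) ∈ L)
    (h0X : (0 : Quaternion ℝ) ∈ X)
    (hfund : ∀ w : Quaternion ℝ, ∃! d, d ∈ L ∧ w - d ∈ X)
    (hint : ∃ ζ ∈ interior X, ζ ≠ 0)
    (t : ℝ) (ht : 0 ≤ t) :
    ∃ Ct : ℝ, 0 < Ct ∧
      ∀ q : Quaternion ℝ, 1 < ‖q‖ →
        ∀ α β : ℝ, α ∈ Set.Ioo (0 : ℝ) 1 → β ∈ Set.Ioo (0 : ℝ) 1 →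
          α * β * ‖q‖ = 1 → Ct * β ≤ 1 →
          BobWinning X
            {z | z ∈ X ∧ ∃ m : ℕ, ‖qdig L X hfund q m z‖ ≤ t} α β := by
  classical
  obtain ⟨R₀, hR₀⟩ := hbd.exists_norm_le
  set R : ℝ := max R₀ 1 with hRdef
  have hR : ∀ x ∈ X, ‖x‖ ≤ R := fun x hx => (hR₀ x hx).trans (le_max_left _ _)
  have hR1 : (1:ℝ) ≤ R := le_max_right _ _
  obtain ⟨ζ, hζint, -⟩ := hint
  obtain ⟨ε, hε, hball⟩ := Metric.mem_nhds_iff.mp (mem_interior_iff_mem_nhds.mp hζint)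
  set ρ : ℝ := ε / 2 with hρdef
  have hρ : 0 < ρ := by positivity
  have hclos : Metric.closedBall ζ ρ ⊆ X := by
    refine (Metric.closedBall_subset_ball ?_).trans hball
    rw [hρdef]; linarith
  set s : ℝ := t + 2 * R with hsdef
  have hs : 0 ≤ s := by rw [hsdef]; linarith
  refine ⟨(t + 3 * R + ρ) / ρ, by positivity, ?_⟩
  intro q hq α β hα hβ hαβ hC
  obtain ⟨hα0, hα1⟩ := hα
  obtain ⟨hβ0, hβ1⟩ := hβ
  have hqn : (0:ℝ) < ‖q‖ := lt_trans one_pos hq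
  have hq0 : q ≠ 0 := by
    intro h; rw [h, norm_zero] at hq; linarith
  have hpow0 : ∀ n : ℕ, (q : Quaternion ℝ) ^ n ≠ 0 := fun n => pow_ne_zero n hq0
  have hβρ : β * (t + 3 * R + ρ) ≤ ρ := by
    rw [div_mul_eq_mul_div, div_le_one hρ] at hC
    nlinarith
  have hαβpos : 0 < α * β := mul_pos hα0 hβ0
  have hqαβ : ∀ n : ℕ, ‖q‖ ^ n * ((α * β) ^ n) = 1 := by
    intro n
    rw [← mul_pow]
    have h1 : ‖q‖ * (α * β) = 1 := by rw [mul_comm]; exact hαβ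
    rw [h1, one_pow]
  set T : Quaternion ℝ → Quaternion ℝ := qT L X hfund q with hTdef
  set g : (n : ℕ) → (Fin (n + 1) → Quaternion ℝ) → Quaternion ℝ :=
    fun n ys =>
      (hist L X hfund ζ s q (fun i => if h : i < n + 1 then ys ⟨i, h⟩ else 0) (n + 1)).1
    with hgdef
  have hζX : ζ ∈ X := hclos (Metric.mem_closedBall_self hρ.le)
  refine ⟨ρ, hρ, ζ, hζX, g, ?_⟩
  intro y hy
  set H : ℕ → Quaternion ℝ × Quaternion ℝ := hist L X hfund ζ s q y with hHdef
  set D : ℕ → Quaternion ℝ := fun n => stepD L X hfund ζ s (q * (q ^ n * y n - (H n).2))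
    with hDdef
  have hH0 : H 0 = (ζ, 0) := rfl
  have hHsucc : ∀ n, H (n + 1) =
      ((q ^ (n + 1))⁻¹ * (ζ + (q * (H n).2 + D n)), q * (H n).2 + D n) := fun n => rfl
  have hbob : ∀ n, bobSeq ζ g y n = (H n).1 := by
    intro n
    cases n with
    | zero => rfl
    | succ n =>
      show g n (fun i => y i.1) = (H (n + 1)).1
      rw [hgdef]
      simp only
      rw [hHdef]
      congr 1
      apply hist_congr
      intro m hm
      simp [hm]
  have halice : ∀ n, ‖(H n).1 - y n‖ ≤ (α * β) ^ n * ρ - α * ((α * β) ^ n * ρ) := by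
    intro n
    have h1 := (hy n).2
    rw [hbob n, dist_eq_norm] at h1
    linarith
  have hbobleg : ∀ n, ‖y n - (H (n + 1)).1‖ ≤ (α * β) ^ (n + 1) * (t + 3 * R) := by
    intro n
    have e1 : q ^ (n + 1) * (y n - (H (n + 1)).1) =
        q * (q ^ n * y n - (H n).2) - (ζ + D n) := by
      rw [hHsucc n]
      simp only
      rw [mul_sub, mul_inv_cancel_left₀ (hpow0 (n + 1)), pow_succ']
      noncomm_ring
    have e2 : ‖q‖ ^ (n + 1) * ‖y n - (H (n + 1)).1‖ =
        ‖q * (q ^ n * y n - (H n).2) - (ζ + D n)‖ := by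
      rw [← e1, norm_mul, norm_pow]
    have e3 : ‖q * (q ^ n * y n - (H n).2) - (ζ + D n)‖ ≤ s + R := by
      rw [hDdef]
      exact stepD_dist_le L X hfund ζ hs hR _
    have hq1 : (0:ℝ) < ‖q‖ ^ (n + 1) := pow_pos hqn _
    rw [← mul_le_mul_iff_right₀ hq1, e2]
    calc ‖q * (q ^ n * y n - (H n).2) - (ζ + D n)‖ ≤ s + R := e3
      _ = t + 3 * R := by rw [hsdef]; ring
      _ = ‖q‖ ^ (n + 1) * ((α * β) ^ (n + 1) * (t + 3 * R)) := by
          rw [← mul_assoc, hqαβ (n + 1), one_mul]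
  have hqdg : ∀ w : Quaternion ℝ,
      qdg L X hfund q w ∈ L ∧ q * w - qdg L X hfund q w ∈ X :=
    fun w => (hfund (q * w)).choose_spec.1
  have haff : ∀ n, ∀ z : Quaternion ℝ,
      (∀ m, m < n → qdg L X hfund q (T^[m] z) = D m) →
      T^[n] z = q ^ n * z - (H n).2 := by
    intro n
    induction n with
    | zero => intro z _; simp [hH0]
    | succ n ih =>
      intro z hz
      rw [Function.iterate_succ_apply']
      have h1 : T^[n] z = q ^ n * z - (H n).2 :=
        ih z (fun m hm => hz m (hm.trans n.lt_succ_self))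
      have h2 : qdg L X hfund q (T^[n] z) = D n := hz n n.lt_succ_self
      show q * (T^[n] z) - qdg L X hfund q (T^[n] z) = _
      rw [h2, h1, hHsucc n]
      simp only
      rw [pow_succ']
      noncomm_ring
  have hkey2 : ∀ n : ℕ,
      (α * β) ^ (n + 1) * (t + 3 * R) + (α * β) ^ (n + 1) * ρ ≤ α * ((α * β) ^ n * ρ) := by
    intro n
    have h1 : (α * β) ^ (n + 1) * (t + 3 * R) + (α * β) ^ (n + 1) * ρ
        = (α * β) ^ n * α * (β * (t + 3 * R + ρ)) := by ring
    have h2 : (α * β) ^ n * α * (β * (t + 3 * R + ρ)) ≤ (α * β) ^ n * α * ρ :=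
      mul_le_mul_of_nonneg_left hβρ (by positivity)
    have h3 : (α * β) ^ n * α * ρ = α * ((α * β) ^ n * ρ) := by ring
    linarith
  have key : ∀ n, ‖(H n).1 - ζ‖ ≤ ρ - (α * β) ^ n * ρ ∧
      ∀ z : Quaternion ℝ, ‖z - (H n).1‖ ≤ (α * β) ^ n * ρ →
        ∀ m, m < n → qdg L X hfund q (T^[m] z) = D m := by
    intro n
    induction n with
    | zero =>
      constructor
      · simp [hH0]
      · intro z _ m hm; exact absurd hm (Nat.not_lt_zero m)
    | succ n ih =>
      have hA := halice n
      have hB := hbobleg n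
      have hK := hkey2 n
      constructor
      · have h4 : dist ((H (n + 1)).1) ζ ≤
            dist ((H (n + 1)).1) (y n) + dist (y n) ((H n).1) + dist ((H n).1) ζ :=
          dist_triangle4 _ _ _ _
        rw [dist_eq_norm, dist_eq_norm, dist_eq_norm, dist_eq_norm] at h4
        rw [norm_sub_rev ((H (n + 1)).1) (y n)] at h4
        rw [norm_sub_rev (y n) ((H n).1)] at h4
        have := ih.1
        linarith
      · intro z hz m hm
        have hz1 : ‖z - (H n).1‖ ≤ (α * β) ^ n * ρ := by
          have h4 : dist z ((H n).1) ≤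
              dist z ((H (n + 1)).1) + dist ((H (n + 1)).1) (y n) + dist (y n) ((H n).1) :=
            dist_triangle4 _ _ _ _
          rw [dist_eq_norm, dist_eq_norm, dist_eq_norm, dist_eq_norm] at h4
          rw [norm_sub_rev ((H (n + 1)).1) (y n)] at h4
          rw [norm_sub_rev (y n) ((H n).1)] at h4
          linarith
        rcases Nat.lt_succ_iff_lt_or_eq.mp hm with h | h
        · exact ih.2 z hz1 m h
        · subst h
          have hdig : ∀ k, k < m → qdg L X hfund q (T^[k] z) = D k := ih.2 z hz1
          have haffz : T^[m] z = q ^ m * z - (H m).2 := haff m z hdig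
          have e1 : q * (T^[m] z) - D m = q ^ (m + 1) * (z - (H (m + 1)).1) + ζ := by
            rw [haffz, hHsucc m]
            simp only
            rw [mul_sub (q ^ (m + 1)), mul_inv_cancel_left₀ (hpow0 (m + 1)), pow_succ']
            noncomm_ring
          have hnorm : ‖q ^ (m + 1) * (z - (H (m + 1)).1)‖ ≤ ρ := by
            rw [norm_mul, norm_pow]
            calc ‖q‖ ^ (m + 1) * ‖z - (H (m + 1)).1‖
                ≤ ‖q‖ ^ (m + 1) * ((α * β) ^ (m + 1) * ρ) :=
                  mul_le_mul_of_nonneg_left hz (by positivity)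
              _ = ρ := by rw [← mul_assoc, hqαβ (m + 1), one_mul]
          have hXm : q * (T^[m] z) - D m ∈ X := by
            apply hclos
            rw [Metric.mem_closedBall, dist_eq_norm, e1]
            simpa using hnorm
          refine (hfund (q * (T^[m] z))).unique (hqdg (T^[m] z)) ⟨?_, hXm⟩
          rw [hDdef]
          exact stepD_mem L X hfund ζ s _
  have hDt : ∀ n, t < ‖D n‖ := by
    intro n
    have h1 : s - R ≤ ‖D n‖ := by
      simp only [hDdef]
      exact stepD_norm_ge L X hfund ζ hs hR (q * (q ^ n * y n - (H n).2))
    have h2 : s - R = t + R := by rw [hsdef]; ring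
    rw [h2] at h1
    linarith
  refine ⟨fun n => ⟨?_, ?_⟩, ?_⟩
  · rw [hbob]
    apply hclos
    rw [Metric.mem_closedBall, dist_eq_norm]
    have h1 := (key (n + 1)).1
    have h2 : (0:ℝ) ≤ (α * β) ^ (n + 1) * ρ := by positivity
    linarith
  · rw [hbob, dist_eq_norm]
    linarith [hbobleg n, hkey2 n]
  · intro ω hω hωS
    obtain ⟨hωX, m, hm⟩ := hωS
    have hxlim : Filter.Tendsto (fun n => (H n).1) Filter.atTop (nhds ω) :=
      hω.congr hbob
    have hchain : ∀ n k, n ≤ k →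
        ‖(H k).1 - (H n).1‖ ≤ (α * β) ^ n * ρ - (α * β) ^ k * ρ := by
      intro n k hnk
      induction k, hnk using Nat.le_induction with
      | base => simp
      | succ k hk ihk =>
        have h4 : dist ((H (k + 1)).1) ((H n).1) ≤
            dist ((H (k + 1)).1) (y k) + dist (y k) ((H k).1) + dist ((H k).1) ((H n).1) :=
          dist_triangle4 _ _ _ _
        rw [dist_eq_norm, dist_eq_norm, dist_eq_norm, dist_eq_norm] at h4
        rw [norm_sub_rev ((H (k + 1)).1) (y k)] at h4
        rw [norm_sub_rev (y k) ((H k).1)] at h4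
        have hA := halice k
        have hB := hbobleg k
        have hK := hkey2 k
        linarith
    have hωn : ∀ n, ‖ω - (H n).1‖ ≤ (α * β) ^ n * ρ := by
      intro n
      have hl : Filter.Tendsto (fun k => ‖(H k).1 - (H n).1‖) Filter.atTop
          (nhds ‖ω - (H n).1‖) := (hxlim.sub tendsto_const_nhds).norm
      apply le_of_tendsto hl
      filter_upwards [Filter.eventually_ge_atTop n] with k hk
      have h1 := hchain n k hk
      have h2 : (0:ℝ) ≤ (α * β) ^ k * ρ := by positivity
      linarith
    have hdig : qdg L X hfund q (T^[m] ω) = D m :=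
      (key (m + 1)).2 ω (hωn (m + 1)) m m.lt_succ_self
    have hq2 : qdig L X hfund q m ω = D m := hdig
    rw [hq2] at hm
    exact absurd hm (not_le.mpr (hDt m))
end
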